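/- Let n be an even natural number and S̃_n(x) = Σ_{k=0, k≠n/2}^{n} ((−1)^k / (2ⁿ (n − 2k))) · C(n,k) · sin((n − 2k)·x − nπ/2) + (1/2ⁿ) · C(n, n/2) · x. Then S̃_n is strictly increasing on the interval [−π, 0]; in particular S̃_n is injective there, so the conserved density v(B,r) = r^{2+3n/2} S̃_n(B/r²) is invertible as a function of B for B/r² ∈ [−π, 0]. -/

import Mathlib

open Real Finset

/-- The conserved-density profile for even `n`, with the singular `k = n/2`
term of the formal series replaced by its limit `(1/2ⁿ) C(n,n/2) x`. -/
noncomputable def Seven (n : ℕ) (x : ℝ) : ℝ :=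
  (∑ k ∈ (Finset.range (n + 1)).erase (n / 2),
    ((-1 : ℝ) ^ k / (2 ^ n * ((n : ℝ) - 2 * k))) * (n.choose k : ℝ) *
      Real.sin (((n : ℝ) - 2 * k) * x - (n : ℝ) * π / 2)) +
  (1 / 2 ^ n : ℝ) * (n.choose (n / 2) : ℝ) * x

lemma cos_def' (z : ℂ) : Complex.cos z = (Complex.exp (z*Complex.I) + Complex.exp (-z*Complex.I))/2 := rfl

lemma cos_pow_complex (n : ℕ) (z : ℂ) :
    Complex.cos z ^ n =
      ∑ k ∈ Finset.range (n+1), ((n.choose k : ℂ)/2^n) * Complex.cos (((n:ℂ) - 2*k) * z) := by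
  have key : ∑ k ∈ Finset.range (n+1),
      (n.choose k : ℂ) * Complex.exp ((((n:ℂ) - 2*k) * z) * Complex.I)
      = ∑ k ∈ Finset.range (n+1),
      (n.choose k : ℂ) * Complex.exp (-(((n:ℂ) - 2*k) * z) * Complex.I) := by
    rw [← Finset.sum_range_reflect]
    apply Finset.sum_congr rfl
    intro k hk
    have hk' : k ≤ n := Nat.lt_succ_iff.mp (Finset.mem_range.mp hk)
    have h1 : n + 1 - 1 - k = n - k := by omega
    rw [h1, Nat.choose_symm hk']
    congr 2
    push_cast [Nat.cast_sub hk']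
    ring
  have h1 : Complex.cos z ^ n
      = (1/2^n) * ∑ k ∈ Finset.range (n+1),
          (n.choose k : ℂ) * Complex.exp (-(((n:ℂ) - 2*k) * z) * Complex.I) := by
    rw [cos_def', div_pow, add_pow, Finset.sum_div, Finset.mul_sum]
    apply Finset.sum_congr rfl
    intro k hk
    have hk' : k ≤ n := Nat.lt_succ_iff.mp (Finset.mem_range.mp hk)
    rw [← Complex.exp_nat_mul, ← Complex.exp_nat_mul, ← Complex.exp_add]
    have : ((k:ℂ) * (z * Complex.I) + ((n - k : ℕ):ℂ) * (-z * Complex.I))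
        = -(((n:ℂ) - 2*k) * z) * Complex.I := by
      push_cast [Nat.cast_sub hk']
      ring
    rw [this]; ring
  have h2 : ∑ k ∈ Finset.range (n+1), ((n.choose k : ℂ)/2^n) * Complex.cos (((n:ℂ) - 2*k) * z)
      = ∑ k ∈ Finset.range (n+1),
          ((n.choose k : ℂ)/2^(n+1)) * Complex.exp ((((n:ℂ) - 2*k) * z) * Complex.I)
        + ∑ k ∈ Finset.range (n+1),
          ((n.choose k : ℂ)/2^(n+1)) * Complex.exp (-(((n:ℂ) - 2*k) * z) * Complex.I) := by
    rw [← Finset.sum_add_distrib]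
    apply Finset.sum_congr rfl
    intro k _
    rw [cos_def']
    ring
  have h3 : ∑ k ∈ Finset.range (n+1),
      ((n.choose k : ℂ)/2^(n+1)) * Complex.exp ((((n:ℂ) - 2*k) * z) * Complex.I)
      = ∑ k ∈ Finset.range (n+1),
      ((n.choose k : ℂ)/2^(n+1)) * Complex.exp (-(((n:ℂ) - 2*k) * z) * Complex.I) := by
    have := congrArg (fun s => (1/2^(n+1) : ℂ) * s) key
    simp only [Finset.mul_sum] at this
    convert this using 2 with k hk
    · ring
    · ring
  rw [h1, h2, h3, ← Finset.sum_add_distrib, Finset.mul_sum]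
  apply Finset.sum_congr rfl
  intro k _
  ring

lemma cos_pow_real (n : ℕ) (x : ℝ) :
    Real.cos x ^ n =
      ∑ k ∈ Finset.range (n+1), ((n.choose k : ℝ)/2^n) * Real.cos (((n:ℝ) - 2*k) * x) := by
  have h := cos_pow_complex n (x : ℂ)
  have h2 : ((Real.cos x ^ n : ℝ) : ℂ)
      = ((∑ k ∈ Finset.range (n+1), ((n.choose k : ℝ)/2^n) * Real.cos (((n:ℝ) - 2*k) * x) : ℝ) : ℂ) := by
    push_cast
    rw [h]
  exact_mod_cast h2

lemma sin_pow_expand (n : ℕ) (x : ℝ) :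
    Real.sin x ^ n =
      ∑ k ∈ Finset.range (n+1),
        ((-1:ℝ)^k * (n.choose k : ℝ)/2^n) * Real.cos (((n:ℝ) - 2*k) * x - (n:ℝ) * π / 2) := by
  have hs : Real.sin x = Real.cos (x - π/2) := by
    rw [Real.cos_sub]
    simp
  rw [hs, cos_pow_real]
  apply Finset.sum_congr rfl
  intro k _
  have harg : ((n:ℝ) - 2*k) * (x - π/2)
      = (((n:ℝ) - 2*k) * x - (n:ℝ) * π / 2) + (k:ℝ) * π := by ring
  rw [harg, Real.cos_add_nat_mul_pi]
  ring

lemma seven_hasDerivAt (n : ℕ) (hn : Even n) (x : ℝ) :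
    HasDerivAt (Seven n) (Real.sin x ^ n) x := by
  obtain ⟨m, hm⟩ := hn
  have hmn : n / 2 = m := by omega
  have hmem : n / 2 ∈ Finset.range (n+1) := by
    simp [Nat.lt_succ_iff]
    omega
  -- derivative of the sum part
  have hsum : HasDerivAt
      (fun x => ∑ k ∈ (Finset.range (n + 1)).erase (n / 2),
        ((-1 : ℝ) ^ k / (2 ^ n * ((n : ℝ) - 2 * k))) * (n.choose k : ℝ) *
          Real.sin (((n : ℝ) - 2 * k) * x - (n : ℝ) * π / 2))
      (∑ k ∈ (Finset.range (n + 1)).erase (n / 2),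
        ((-1:ℝ)^k * (n.choose k : ℝ)/2^n) * Real.cos (((n:ℝ) - 2*k) * x - (n:ℝ) * π / 2)) x := by
    apply HasDerivAt.fun_sum
    intro k hk
    have hne : ((n:ℝ) - 2*k) ≠ 0 := by
      have hk2 : k ≠ n / 2 := (Finset.mem_erase.mp hk).1
      intro h
      have h1 : (n:ℝ) = 2 * k := by linarith
      have h2 : n = 2 * k := by exact_mod_cast h1
      omega
    set a : ℝ := (n:ℝ) - 2*k with ha
    have h0 : HasDerivAt (fun x : ℝ => a * x - (n:ℝ) * π / 2) a x := by
      simpa using ((hasDerivAt_id x).const_mul a).sub_const ((n:ℝ) * π / 2)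
    have h1 : HasDerivAt (fun x : ℝ => Real.sin (a * x - (n:ℝ) * π / 2))
        (Real.cos (a * x - (n:ℝ) * π / 2) * a) x :=
      (Real.hasDerivAt_sin _).comp x h0
    have h2 := h1.const_mul (((-1:ℝ)^k / (2^n * a)) * (n.choose k : ℝ))
    have hval2 : ((-1:ℝ)^k * (n.choose k : ℝ)/2^n) * Real.cos (a * x - (n:ℝ) * π / 2)
        = (((-1:ℝ)^k / (2^n * a)) * (n.choose k : ℝ)) * (Real.cos (a * x - (n:ℝ) * π / 2) * a) := by
      field_simp
    rw [hval2]
    exact h2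
  have hlin : HasDerivAt (fun x : ℝ => (1 / 2 ^ n : ℝ) * (n.choose (n / 2) : ℝ) * x)
      ((1 / 2 ^ n : ℝ) * (n.choose (n / 2) : ℝ)) x := by
    simpa using (hasDerivAt_id x).const_mul ((1 / 2 ^ n : ℝ) * (n.choose (n / 2) : ℝ))
  have htot := hsum.add hlin
  have hval : (∑ k ∈ (Finset.range (n + 1)).erase (n / 2),
        ((-1:ℝ)^k * (n.choose k : ℝ)/2^n) * Real.cos (((n:ℝ) - 2*k) * x - (n:ℝ) * π / 2))
      + (1 / 2 ^ n : ℝ) * (n.choose (n / 2) : ℝ) = Real.sin x ^ n := by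
    rw [sin_pow_expand]
    rw [← Finset.sum_erase_add _ _ hmem]
    congr 1
    have hz : ((n:ℝ) - 2*(n/2 : ℕ)) = 0 := by
      rw [hmn]
      push_cast [hm]
      ring
    rw [hz]
    have harg2 : (0:ℝ) * x - (n:ℝ) * π / 2 = -(0 + (m:ℝ) * π) := by
      push_cast [hm]; ring
    rw [harg2, Real.cos_neg, Real.cos_add_nat_mul_pi, Real.cos_zero, mul_one, hmn]
    have hsq : ((-1:ℝ))^(m*2) = 1 := Even.neg_one_pow ⟨m, by ring⟩
    have h4 : ((-1:ℝ)^m * (n.choose m : ℝ) / 2^n * (-1)^m)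
        = ((-1:ℝ))^(m*2) * ((n.choose m:ℝ)/2^n) := by
      rw [pow_mul]
      ring
    rw [h4, hsq]
    ring
  rw [hval] at htot
  exact htot

/-- For even `n`, `S̃_n` is strictly increasing on `[−π, 0]`, hence injective
there, so `v(B,r) = r^{2+3n/2} S̃_n(B/r²)` is invertible in `B` for
`B/r² ∈ [−π, 0]`. -/
theorem Seven_strictMonoOn (n : ℕ) (hn : Even n) :
    StrictMonoOn (Seven n) (Set.Icc (-π) 0) ∧
    Set.InjOn (Seven n) (Set.Icc (-π) 0) ∧
    (∀ r : ℝ, 0 < r →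
      Set.InjOn (fun B : ℝ => r ^ ((2 : ℝ) + 3 * (n : ℝ) / 2) * Seven n (B / r ^ 2))
        {B : ℝ | B / r ^ 2 ∈ Set.Icc (-π) 0}) := by
  have hmono : StrictMonoOn (Seven n) (Set.Icc (-π) 0) := by
    apply strictMonoOn_of_deriv_pos (convex_Icc _ _)
    · exact fun y _ => ((seven_hasDerivAt n hn y).differentiableAt.continuousAt).continuousWithinAt
    · intro y hy
      rw [interior_Icc] at hy
      rw [(seven_hasDerivAt n hn y).deriv]
      have hsin : Real.sin y < 0 := Real.sin_neg_of_neg_of_neg_pi_lt hy.2 hy.1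
      exact hn.pow_pos (ne_of_lt hsin)
  refine ⟨hmono, hmono.injOn, ?_⟩
  intro r hr B1 hB1 B2 hB2 heq
  simp only [Set.mem_setOf_eq] at hB1 hB2
  have hrp : (0:ℝ) < r ^ ((2 : ℝ) + 3 * (n : ℝ) / 2) := Real.rpow_pos_of_pos hr _
  have h1 : Seven n (B1 / r ^ 2) = Seven n (B2 / r ^ 2) :=
    mul_left_cancel₀ (ne_of_gt hrp) heq
  have h2 := hmono.injOn hB1 hB2 h1
  have hr2 : (r:ℝ) ^ 2 ≠ 0 := pow_ne_zero _ (ne_of_gt hr)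
  field_simp at h2
  exact h2
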